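/- Let k ≥ 2 and let G be a finite connected simple graph with at least two vertices. Let G' be the simple graph whose vertex set is the disjoint union of V(G) and E(G) × {1,…,k−1}, with the following edges and no others: u,v ∈ V(G) are adjacent in G' iff they are adjacent in G; (e,i) and (e,j) are adjacent iff i ≠ j (so each set {e} × {1,…,k−1} is a clique K_e of size k−1); and v ∈ V(G) is adjacent to (e,i) iff v is an endpoint of the edge e. Then G is (k+1)-colorable if and only if the vertex set of G' can be partitioned into k+1 dominating sets of G', i.e., there exists a function f from V(G') to a set of k+1 colors such that each color class f⁻¹(c) is a dominating set of G'. -/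

import Mathlib

/-- The graph `G'` obtained from `G` by adding, for every edge `e` of `G`, a clique `K_e`
of size `m` (on `{e} × Fin m`) which is complete to both endpoints of `e`. -/
def domaticGadget {V : Type*} (G : SimpleGraph V) (m : ℕ) :
    SimpleGraph (V ⊕ G.edgeSet × Fin m) where
  Adj x y :=
    match x, y with
    | Sum.inl u, Sum.inl v => G.Adj u v
    | Sum.inl u, Sum.inr (e, _) => u ∈ (e : Sym2 V)
    | Sum.inr (e, _), Sum.inl u => u ∈ (e : Sym2 V)
    | Sum.inr (e, i), Sum.inr (f, j) => e = f ∧ i ≠ j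
  symm := by
    refine ⟨?_⟩
    rintro (u | ⟨e, i⟩) (v | ⟨f, j⟩) h
    · exact h.symm
    · exact h
    · exact h
    · exact ⟨h.1.symm, h.2.symm⟩
  loopless := by
    refine ⟨?_⟩
    rintro (u | ⟨e, i⟩) h
    · exact G.irrefl h
    · exact h.2 rfl

/-- Let `k ≥ 2` and let `G` be a finite connected simple graph with at least two vertices.
Then `G` is `(k+1)`-colorable if and only if the vertex set of `G'` (obtained by adding a
`(k-1)`-clique complete to both endpoints of each edge) can be partitioned into `k + 1`
dominating sets of `G'`. -/
theorem colorable_iff_domatic_partition {V : Type*} [Fintype V]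
    (k : ℕ) (hk : 2 ≤ k) (G : SimpleGraph V) (hG : G.Connected)
    (hV : 1 < Fintype.card V) :
    G.Colorable (k + 1) ↔
      ∃ f : (V ⊕ G.edgeSet × Fin (k - 1)) → Fin (k + 1),
        ∀ (col : Fin (k + 1)) (x : V ⊕ G.edgeSet × Fin (k - 1)),
          f x = col ∨ ∃ y, f y = col ∧ (domaticGadget G (k - 1)).Adj x y := by
  classical
  have rep : ∀ e : G.edgeSet, ∃ u v, G.Adj u v ∧ (e : Sym2 V) = s(u, v) := by
    rintro ⟨e, he⟩
    revert he
    induction e using Sym2.ind with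
    | _ u v => exact fun he => ⟨u, v, he, rfl⟩
  constructor
  · rintro ⟨c⟩
    set S : G.edgeSet → Finset (Fin (k + 1)) :=
      fun e => Finset.univ.filter (fun x => x ∉ Sym2.map c (e : Sym2 V)) with hS
    have key : ∀ e : G.edgeSet, (S e).card = k - 1 := by
      intro e
      obtain ⟨u, v, huv, hev⟩ := rep e
      have hne : c u ≠ c v := c.valid huv
      have h2 : S e = Finset.univ \ {c u, c v} := by
        ext x
        simp only [hS, Finset.mem_filter, Finset.mem_univ, true_and, hev,
          Sym2.map_pair_eq, Sym2.mem_iff, not_or, Finset.mem_sdiff, Finset.mem_insert,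
          Finset.mem_singleton]
      rw [h2, Finset.card_sdiff_of_subset (by simp)]
      rw [Finset.card_insert_of_notMem (by simpa using hne), Finset.card_singleton]
      simp only [Finset.card_univ, Fintype.card_fin]
      omega
    set φ : ∀ e : G.edgeSet, Fin (k - 1) → Fin (k + 1) :=
      fun e i => ((S e).equivFin.symm ((finCongr (key e).symm) i) : Fin (k + 1)) with hφ
    have φmem : ∀ e i, φ e i ∈ S e := fun e i =>
      ((S e).equivFin.symm ((finCongr (key e).symm) i)).2
    have φsurj : ∀ e, ∀ x ∈ S e, ∃ i, φ e i = x := by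
      intro e x hx
      refine ⟨finCongr (key e) ((S e).equivFin ⟨x, hx⟩), ?_⟩
      simp [hφ]
    have hadj : ∀ v : V, ∃ u, G.Adj v u := by
      intro v
      obtain ⟨w, hw⟩ := Fintype.exists_ne_of_one_lt_card hV v
      obtain ⟨p⟩ := hG.preconnected v w
      exact ⟨p.getVert 1, p.adj_snd (SimpleGraph.Walk.not_nil_of_ne hw.symm)⟩
    refine ⟨Sum.elim (fun v => c v) (fun p => φ p.1 p.2), ?_⟩
    rintro col (v | ⟨e, i⟩)
    · obtain ⟨u, hu⟩ := hadj v
      set e : G.edgeSet := ⟨s(v, u), hu⟩ with he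
      by_cases h1 : c v = col
      · exact Or.inl h1
      by_cases h2 : c u = col
      · exact Or.inr ⟨Sum.inl u, h2, hu⟩
      · have hcol : col ∈ S e := by
          simp only [hS, Finset.mem_filter, Finset.mem_univ, true_and]
          intro hmem
          rw [Sym2.map_pair_eq, Sym2.mem_iff] at hmem
          rcases hmem with h | h
          · exact h1 h.symm
          · exact h2 h.symm
        obtain ⟨i, hi⟩ := φsurj e col hcol
        exact Or.inr ⟨Sum.inr (e, i), hi, Sym2.mem_mk_left v u⟩
    · obtain ⟨u, v, huv, hev⟩ := rep e
      by_cases h1 : c u = col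
      · refine Or.inr ⟨Sum.inl u, h1, ?_⟩
        show u ∈ (e : Sym2 V)
        rw [hev]; exact Sym2.mem_mk_left u v
      by_cases h2 : c v = col
      · refine Or.inr ⟨Sum.inl v, h2, ?_⟩
        show v ∈ (e : Sym2 V)
        rw [hev]; exact Sym2.mem_mk_right u v
      · have hcol : col ∈ S e := by
          simp only [hS, Finset.mem_filter, Finset.mem_univ, true_and]
          intro hmem
          rw [hev, Sym2.map_pair_eq, Sym2.mem_iff] at hmem
          rcases hmem with h | h
          · exact h1 h.symm
          · exact h2 h.symm
        obtain ⟨j, hj⟩ := φsurj e col hcol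
        by_cases hji : j = i
        · exact Or.inl (hji ▸ hj)
        · exact Or.inr ⟨Sum.inr (e, j), hj, rfl, fun h => hji h.symm⟩
  · rintro ⟨f, hf⟩
    refine ⟨SimpleGraph.Coloring.mk (fun v => f (Sum.inl v)) ?_⟩
    intro u v huv heq
    set e : G.edgeSet := ⟨s(u, v), huv⟩ with he
    have hkpos : 0 < k - 1 := by omega
    set i : Fin (k - 1) := ⟨0, hkpos⟩ with hi
    set h : Option (Fin (k - 1)) → Fin (k + 1) :=
      fun o => o.elim (f (Sum.inl u)) (fun j => f (Sum.inr (e, j))) with hh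
    have hns : ¬ Function.Surjective h := by
      intro hs
      have := Fintype.card_le_of_surjective h hs
      simp [Fintype.card_option] at this
      omega
    rw [Function.Surjective] at hns
    push_neg at hns
    obtain ⟨col, hcol⟩ := hns
    rcases hf col (Sum.inr (e, i)) with h1 | ⟨y, hy, hadj⟩
    · exact hcol (some i) h1
    · rcases y with w | ⟨e', j⟩
      · have hw : w = u ∨ w = v := Sym2.mem_iff.mp hadj
        rcases hw with rfl | rfl
        · exact hcol none hy
        · exact hcol none (heq.trans hy)
      · obtain ⟨he', hij⟩ := hadj
        subst he'
        exact hcol (some j) hy
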